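/- Inserting a k-superior edge set E_k into G and then a (k')-superior edge set E_{k'} with k' > k+1 (computed with respect to the original G): no vertex's core number increases by more than 1 over the combined insertion, because any vertex whose core number increased from k to k+1 by the insertion of E_k has its core number unchanged by the subsequent insertion of E_{k'}. -/

import Mathlib

open SimpleGraph

/-- The core number of a vertex: the largest `k` such that the vertex lies in a
subgraph of `G` with minimum degree at least `k`. -/
noncomputable def coreNumber {V : Type*} (G : SimpleGraph V) (v : V) : ℕ :=
  sSup {k : ℕ | ∃ H : G.Subgraph, v ∈ H.verts ∧ ∀ w ∈ H.verts, k ≤ (H.neighborSet w).ncard}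

/-- `S` is a `k`-superior edge set of new edges with respect to `G`. -/
def IsKSuperiorInsertSet {V : Type*} (G : SimpleGraph V) (k : ℕ) (S : Set (Sym2 V)) : Prop :=
  (∀ e ∈ S, e ∉ G.edgeSet ∧ ∃ u v : V, u ≠ v ∧ e = s(u,v) ∧
      coreNumber G u = k ∧ coreNumber G u ≤ coreNumber G v) ∧
  ∀ e₁ ∈ S, ∀ e₂ ∈ S, e₁ ≠ e₂ → ∀ u : V, u ∈ e₁ → u ∈ e₂ → k < coreNumber G u

namespace CoreAux

variable {V : Type*}

lemma zero_mem (G : SimpleGraph V) (v : V) :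
    (0 : ℕ) ∈ {k : ℕ | ∃ H : G.Subgraph, v ∈ H.verts ∧
      ∀ w ∈ H.verts, k ≤ (H.neighborSet w).ncard} :=
  ⟨G.singletonSubgraph v, by simp [SimpleGraph.singletonSubgraph], fun _ _ => Nat.zero_le _⟩

lemma bdd [Fintype V] (G : SimpleGraph V) (v : V) :
    BddAbove {k : ℕ | ∃ H : G.Subgraph, v ∈ H.verts ∧
      ∀ w ∈ H.verts, k ≤ (H.neighborSet w).ncard} := by
  refine ⟨Fintype.card V, ?_⟩
  rintro n ⟨H, hv, hd⟩
  calc n ≤ (H.neighborSet v).ncard := hd v hv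
    _ ≤ (Set.univ : Set V).ncard := Set.ncard_le_ncard (Set.subset_univ _) Set.finite_univ
    _ = Fintype.card V := by rw [Set.ncard_univ, Nat.card_eq_fintype_card]

lemma le_coreNumber [Fintype V] {G : SimpleGraph V} {v : V} {n : ℕ}
    (h : ∃ H : G.Subgraph, v ∈ H.verts ∧ ∀ w ∈ H.verts, n ≤ (H.neighborSet w).ncard) :
    n ≤ coreNumber G v :=
  le_csSup (bdd G v) h

lemma coreNumber_spec [Fintype V] (G : SimpleGraph V) (v : V) :
    ∃ H : G.Subgraph, v ∈ H.verts ∧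
      ∀ w ∈ H.verts, coreNumber G v ≤ (H.neighborSet w).ncard :=
  Nat.sSup_mem ⟨0, zero_mem G v⟩ (bdd G v)

lemma coreNumber_mono [Fintype V] {G G' : SimpleGraph V} (h : G ≤ G') (v : V) :
    coreNumber G v ≤ coreNumber G' v := by
  apply csSup_le_csSup (bdd G' v) ⟨0, zero_mem G v⟩
  rintro n ⟨H, hv, hd⟩
  exact ⟨⟨H.verts, H.Adj, fun ha => h (H.adj_sub ha), fun ha => H.edge_vert ha,
    H.symm⟩, hv, hd⟩

open Classical in
noncomputable def pad (G : SimpleGraph V) (t : ℕ) (w : V) : G.Subgraph :=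
  if h : ∃ H : G.Subgraph, w ∈ H.verts ∧ ∀ x ∈ H.verts, t ≤ (H.neighborSet x).ncard
  then h.choose else ⊥

open Classical in
lemma pad_deg (G : SimpleGraph V) (t : ℕ) (w : V) :
    ∀ x ∈ (pad G t w).verts, t ≤ ((pad G t w).neighborSet x).ncard := by
  intro x hx
  unfold pad at hx ⊢
  split_ifs at hx ⊢ with h
  · exact h.choose_spec.2 x hx
  · simp [Subgraph.verts_bot] at hx

open Classical in
lemma pad_mem [Fintype V] (G : SimpleGraph V) {t : ℕ} {w : V} (h : t ≤ coreNumber G w) :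
    w ∈ (pad G t w).verts := by
  obtain ⟨H, hw, hd⟩ := coreNumber_spec G w
  have hex : ∃ H : G.Subgraph, w ∈ H.verts ∧ ∀ x ∈ H.verts, t ≤ (H.neighborSet x).ncard :=
    ⟨H, hw, fun x hx => h.trans (hd x hx)⟩
  unfold pad
  rw [dif_pos hex]
  exact hex.choose_spec.1

lemma core_lower [Fintype V] (G : SimpleGraph V) {G' : SimpleGraph V} (H : G'.Subgraph)
    (t : ℕ)
    (hkey : ∀ x ∈ H.verts, coreNumber G x < t → t ≤ {y | H.Adj x y ∧ G.Adj x y}.ncard) :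
    ∀ v ∈ H.verts, t ≤ coreNumber G v := by
  intro v hv
  set L : G.Subgraph := ⟨H.verts, fun a b => H.Adj a b ∧ G.Adj a b, fun h => h.2,
    fun h => H.edge_vert h.1, ⟨fun a b h => ⟨H.adj_symm h.1, G.adj_symm h.2⟩⟩⟩ with hLdef
  set M : G.Subgraph := L ⊔ ⨆ w, pad G t w with hMdef
  have hLM : L ≤ M := le_sup_left
  have hpadM : ∀ w, pad G t w ≤ M := fun w =>
    (le_iSup (fun w => pad G t w) w).trans le_sup_right
  have hnsub : ∀ (K : G.Subgraph), K ≤ M → ∀ x, (K.neighborSet x).ncard ≤ (M.neighborSet x).ncard := by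
    intro K hK x
    exact Set.ncard_le_ncard (fun y hy => hK.2 hy) (Set.toFinite _)
  apply le_coreNumber
  refine ⟨M, hLM.1 hv, ?_⟩
  intro x hx
  have hpadcase : ∀ w, x ∈ (pad G t w).verts → t ≤ (M.neighborSet x).ncard := by
    intro w hw
    exact (pad_deg G t w x hw).trans (hnsub _ (hpadM w) x)
  have hx' : x ∈ L.verts ∪ ⋃ w, (pad G t w).verts := by
    rw [hMdef, Subgraph.verts_sup, Subgraph.verts_iSup] at hx
    exact hx
  rcases hx' with hx' | hx'
  · by_cases ht : t ≤ coreNumber G x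
    · exact hpadcase x (pad_mem G ht)
    · have := hkey x hx' (lt_of_not_ge ht)
      calc t ≤ {y | H.Adj x y ∧ G.Adj x y}.ncard := this
        _ ≤ (M.neighborSet x).ncard := hnsub L hLM x
  · obtain ⟨s, ⟨w, rfl⟩, hw⟩ := hx'
    exact hpadcase w hw

lemma superior_endpoints {G : SimpleGraph V} {k : ℕ} {S : Set (Sym2 V)}
    (h : IsKSuperiorInsertSet G k S) {x y : V} (hxy : s(x,y) ∈ S) :
    k ≤ coreNumber G x ∧ k ≤ coreNumber G y ∧
      (coreNumber G x = k ∨ coreNumber G y = k) := by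
  obtain ⟨-, u, v, -, he, hu, huv⟩ := h.1 _ hxy
  rw [Sym2.eq_iff] at he
  rcases he with ⟨hx, hy⟩ | ⟨hx, hy⟩ <;> subst hx <;> subst hy
  · exact ⟨hu.ge, hu ▸ huv, Or.inl hu⟩
  · exact ⟨hu ▸ huv, hu.ge, Or.inr hu⟩

lemma superior_unique {G : SimpleGraph V} {k : ℕ} {S : Set (Sym2 V)}
    (h : IsKSuperiorInsertSet G k S) {x y z : V}
    (hx : coreNumber G x = k) (hxy : s(x,y) ∈ S) (hxz : s(x,z) ∈ S) : y = z := by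
  have heq : s(x,y) = s(x,z) := by
    by_contra hne
    have := h.2 _ hxy _ hxz hne x (Sym2.mem_mk_left x y) (Sym2.mem_mk_left x z)
    omega
  exact Sym2.congr_right.mp heq

section Main

variable [Fintype V] {G : SimpleGraph V} {k k' : ℕ} {Ek Ek' : Set (Sym2 V)}

lemma adj_cases (hk : k + 1 < k')
    (H : ((G ⊔ fromEdgeSet Ek) ⊔ fromEdgeSet Ek').Subgraph) {x y : V} (hxy : H.Adj x y) :
    G.Adj x y ∨ s(x,y) ∈ Ek ∨ s(x,y) ∈ Ek' := by
  have := H.adj_sub hxy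
  simp only [SimpleGraph.sup_adj, SimpleGraph.fromEdgeSet_adj] at this
  tauto

lemma stageA (hk : k + 1 < k')
    (hEk : IsKSuperiorInsertSet G k Ek) (hEk' : IsKSuperiorInsertSet G k' Ek')
    {m : ℕ} (hm : k + 2 ≤ m)
    (H : ((G ⊔ fromEdgeSet Ek) ⊔ fromEdgeSet Ek').Subgraph)
    (hδ : ∀ x ∈ H.verts, m ≤ (H.neighborSet x).ncard) :
    ∀ v ∈ H.verts, k + 1 ≤ coreNumber G v := by
  apply core_lower G H (k+1)
  intro x hx hcx
  have hnoEk' : ∀ y, H.Adj x y → s(x,y) ∉ Ek' := by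
    intro y hy hmem
    have := (superior_endpoints hEk' hmem).1
    omega
  by_cases hE : ∃ y0, H.Adj x y0 ∧ s(x,y0) ∈ Ek
  · obtain ⟨y0, hy0, hy0E⟩ := hE
    have hxk : coreNumber G x = k := by
      have := (superior_endpoints hEk hy0E).1
      omega
    have hsub : H.neighborSet x ⊆ insert y0 {y | H.Adj x y ∧ G.Adj x y} := by
      intro y hy
      rcases adj_cases hk H hy with hg | hEkm | hEk'm
      · exact Set.mem_insert_of_mem _ ⟨hy, hg⟩
      · exact (superior_unique hEk hxk hEkm hy0E) ▸ Set.mem_insert _ _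
      · exact absurd hEk'm (hnoEk' y hy)
    have h1 : m ≤ (insert y0 {y | H.Adj x y ∧ G.Adj x y}).ncard :=
      (hδ x hx).trans (Set.ncard_le_ncard hsub (Set.toFinite _))
    have h2 := Set.ncard_insert_le y0 {y | H.Adj x y ∧ G.Adj x y}
    omega
  · have hsub : H.neighborSet x ⊆ {y | H.Adj x y ∧ G.Adj x y} := by
      intro y hy
      rcases adj_cases hk H hy with hg | hEkm | hEk'm
      · exact ⟨hy, hg⟩
      · exact absurd ⟨y, hy, hEkm⟩ hE
      · exact absurd hEk'm (hnoEk' y hy)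
    have h1 : m ≤ {y | H.Adj x y ∧ G.Adj x y}.ncard :=
      (hδ x hx).trans (Set.ncard_le_ncard hsub (Set.toFinite _))
    omega

lemma stageB (hk : k + 1 < k')
    (hEk : IsKSuperiorInsertSet G k Ek) (hEk' : IsKSuperiorInsertSet G k' Ek')
    {m : ℕ} (hm : k' + 2 ≤ m)
    (H : ((G ⊔ fromEdgeSet Ek) ⊔ fromEdgeSet Ek').Subgraph)
    (hδ : ∀ x ∈ H.verts, m ≤ (H.neighborSet x).ncard) :
    ∀ v ∈ H.verts, k' + 1 ≤ coreNumber G v := by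
  have hA := stageA hk hEk hEk' (show k + 2 ≤ m by omega) H hδ
  apply core_lower G H (k'+1)
  intro x hx hcx
  have hnoEk : ∀ y, H.Adj x y → s(x,y) ∉ Ek := by
    intro y hy hmem
    obtain ⟨h1, h2, h3⟩ := superior_endpoints hEk hmem
    have hxv := hA x hx
    have hyv := hA y (H.edge_vert (H.adj_symm hy))
    omega
  by_cases hE : ∃ y0, H.Adj x y0 ∧ s(x,y0) ∈ Ek'
  · obtain ⟨y0, hy0, hy0E⟩ := hE
    have hxk : coreNumber G x = k' := by
      have := (superior_endpoints hEk' hy0E).1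
      omega
    have hsub : H.neighborSet x ⊆ insert y0 {y | H.Adj x y ∧ G.Adj x y} := by
      intro y hy
      rcases adj_cases hk H hy with hg | hEkm | hEk'm
      · exact Set.mem_insert_of_mem _ ⟨hy, hg⟩
      · exact absurd hEkm (hnoEk y hy)
      · exact (superior_unique hEk' hxk hEk'm hy0E) ▸ Set.mem_insert _ _
    have h1 : m ≤ (insert y0 {y | H.Adj x y ∧ G.Adj x y}).ncard :=
      (hδ x hx).trans (Set.ncard_le_ncard hsub (Set.toFinite _))
    have h2 := Set.ncard_insert_le y0 {y | H.Adj x y ∧ G.Adj x y}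
    omega
  · have hsub : H.neighborSet x ⊆ {y | H.Adj x y ∧ G.Adj x y} := by
      intro y hy
      rcases adj_cases hk H hy with hg | hEkm | hEk'm
      · exact ⟨hy, hg⟩
      · exact absurd hEkm (hnoEk y hy)
      · exact absurd ⟨y, hy, hEk'm⟩ hE
    have h1 : m ≤ {y | H.Adj x y ∧ G.Adj x y}.ncard :=
      (hδ x hx).trans (Set.ncard_le_ncard hsub (Set.toFinite _))
    omega

lemma master (hk : k + 1 < k')
    (hEk : IsKSuperiorInsertSet G k Ek) (hEk' : IsKSuperiorInsertSet G k' Ek')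
    (m : ℕ)
    (H : ((G ⊔ fromEdgeSet Ek) ⊔ fromEdgeSet Ek').Subgraph)
    (hδ : ∀ x ∈ H.verts, m ≤ (H.neighborSet x).ncard) :
    ∀ v ∈ H.verts, m ≤ coreNumber G v + 1 := by
  rcases Nat.eq_zero_or_pos m with rfl | hm
  · intro v _; omega
  have key : ∀ v ∈ H.verts, m - 1 ≤ coreNumber G v := by
    apply core_lower G H (m-1)
    intro x hx hcx
    have hsub : H.neighborSet x ⊆ {y | H.Adj x y ∧ G.Adj x y} := by
      intro y hy
      rcases adj_cases hk H hy with hg | hEkm | hEk'm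
      · exact ⟨hy, hg⟩
      · obtain ⟨h1, h2, h3⟩ := superior_endpoints hEk hEkm
        have hm2 : k + 2 ≤ m := by omega
        have hAx := stageA hk hEk hEk' hm2 H hδ x hx
        have hAy := stageA hk hEk hEk' hm2 H hδ y (H.edge_vert (H.adj_symm hy))
        omega
      · obtain ⟨h1, h2, h3⟩ := superior_endpoints hEk' hEk'm
        have hm2 : k' + 2 ≤ m := by omega
        have hBx := stageB hk hEk hEk' hm2 H hδ x hx
        have hBy := stageB hk hEk hEk' hm2 H hδ y (H.edge_vert (H.adj_symm hy))
        omega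
    have h1 : m ≤ {y | H.Adj x y ∧ G.Adj x y}.ncard :=
      (hδ x hx).trans (Set.ncard_le_ncard hsub (Set.toFinite _))
    omega
  intro v hv
  have := key v hv
  omega

end Main

end CoreAux

open CoreAux in
theorem two_step_superior_insert {V : Type*} [Fintype V] (G : SimpleGraph V)
    (k k' : ℕ) (hk : k + 1 < k')
    (Ek Ek' : Set (Sym2 V))
    (hEk : IsKSuperiorInsertSet G k Ek) (hEk' : IsKSuperiorInsertSet G k' Ek') :
    (∀ v : V, coreNumber G v = k →
        coreNumber (G ⊔ fromEdgeSet Ek) v = coreNumber G v + 1 →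
        coreNumber ((G ⊔ fromEdgeSet Ek) ⊔ fromEdgeSet Ek') v =
          coreNumber (G ⊔ fromEdgeSet Ek) v) ∧
    (∀ v : V, coreNumber ((G ⊔ fromEdgeSet Ek) ⊔ fromEdgeSet Ek') v ≤
        coreNumber G v + 1) := by
  have part2 : ∀ v : V, coreNumber ((G ⊔ fromEdgeSet Ek) ⊔ fromEdgeSet Ek') v ≤
      coreNumber G v + 1 := by
    intro v
    obtain ⟨H, hv, hd⟩ := coreNumber_spec ((G ⊔ fromEdgeSet Ek) ⊔ fromEdgeSet Ek') v
    exact master hk hEk hEk' _ H hd v hv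
  refine ⟨?_, part2⟩
  intro v hvk h1
  have hge : coreNumber (G ⊔ fromEdgeSet Ek) v ≤
      coreNumber ((G ⊔ fromEdgeSet Ek) ⊔ fromEdgeSet Ek') v :=
    coreNumber_mono le_sup_left v
  have hle := part2 v
  omega
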